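/- Let W be squarefree-times-prime-power structure W = 2^J · 27 · ∏_{5 ≤ p ≤ w} p, Q ≥ 1 an integer, and b with gcd(b, W) = gcd(b-1, s(W)) = 1, where s(n) is the product of primes p | n with p ≡ -1 (mod 4), p ≠ 3. Then the cardinality of 𝒬 = {c₀ mod Q : gcd(W c₀ + b, Q) = 1, gcd(W c₀ + b - 1, s(Q)) = 1} equals Q · ∏_{p | Q, p ∤ W, p ≡ 1 mod 4 or p ∈ {2,3}} (1 - 1/p) · ∏_{p | Q, p ∤ W, p ≡ -1 mod 4, p ≠ 3} (1 - 2/p). -/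

import Mathlib

open Finset

/-- `sFun q` is the product of the distinct primes `p ∣ q` with
`p ≡ -1 (mod 4)` and `p ≠ 3`. -/
def sFun (n : ℕ) : ℕ := ∏ p ∈ n.primeFactors.filter (fun p => p % 4 = 3 ∧ p ≠ 3), p

lemma sFun_dvd (n : ℕ) : sFun n ∣ n :=
  (Finset.prod_dvd_prod_of_subset _ _ _ (filter_subset _ _)).trans (Nat.prod_primeFactors_dvd n)

lemma sFun_mul {m n : ℕ} (hm : m ≠ 0) (hn : n ≠ 0) (h : Nat.Coprime m n) :
    sFun (m * n) = sFun m * sFun n := by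
  unfold sFun
  rw [Nat.primeFactors_mul hm hn, filter_union,
    Finset.prod_union (disjoint_filter_filter h.disjoint_primeFactors)]

lemma gcd_congr {x y : ℤ} {d : ℕ} (h : (d:ℤ) ∣ y - x) : Int.gcd x d = Int.gcd y d := by
  apply Nat.dvd_antisymm
  · refine Int.natCast_dvd_natCast.mp (Int.dvd_coe_gcd ?_ (Int.gcd_dvd_right _ _))
    have hy : y = (y - x) + x := by ring
    rw [hy]
    exact dvd_add ((Int.gcd_dvd_right (a := x) (b := (d:ℤ))).trans h) (Int.gcd_dvd_left _ _)
  · refine Int.natCast_dvd_natCast.mp (Int.dvd_coe_gcd ?_ (Int.gcd_dvd_right _ _))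
    have hx : x = y - (y - x) := by ring
    rw [hx]
    exact dvd_sub (Int.gcd_dvd_left _ _) ((Int.gcd_dvd_right (a := y) (b := (d:ℤ))).trans h)

/-- The main counting set. -/
def NN (W : ℕ) (b : ℤ) (n : ℕ) : ℕ :=
  ((Finset.range n).filter
    (fun c : ℕ => Int.gcd ((W : ℤ) * (c:ℤ) + b) n = 1 ∧
      Int.gcd ((W : ℤ) * (c:ℤ) + b - 1) (sFun n) = 1)).card

lemma gcd_period (W : ℕ) (a : ℤ) {d m : ℕ} (hd : d ∣ m) {c c' : ℕ} (h : c ≡ c' [MOD m]) :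
    Int.gcd ((W:ℤ) * c + a) d = Int.gcd ((W:ℤ) * c' + a) d := by
  apply _root_.gcd_congr
  have h2 : (m:ℤ) ∣ (c':ℤ) - (c:ℤ) := h.dvd
  have h3 : ((W:ℤ) * c' + a) - ((W:ℤ) * c + a) = (W:ℤ) * ((c':ℤ) - (c:ℤ)) := by ring
  rw [h3]
  exact (((Int.natCast_dvd_natCast.mpr hd).trans h2).mul_left _)

lemma gcd_split (x : ℤ) (m n : ℕ) :
    Int.gcd x (↑(m*n)) = 1 ↔ Int.gcd x m = 1 ∧ Int.gcd x n = 1 := by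
  unfold Int.gcd
  simp only [Int.natAbs_natCast]
  exact Nat.coprime_mul_iff_right

lemma cond_iff (W : ℕ) (b : ℤ) {m n : ℕ} (hm : m ≠ 0) (hn : n ≠ 0) (h : Nat.Coprime m n) (c : ℕ) :
    (Int.gcd ((W:ℤ)*c + b) (↑(m*n)) = 1 ∧ Int.gcd ((W:ℤ)*c + b - 1) (sFun (m*n)) = 1)
    ↔ ((Int.gcd ((W:ℤ)*(c % m : ℕ) + b) m = 1 ∧ Int.gcd ((W:ℤ)*(c % m : ℕ) + b - 1) (sFun m) = 1)
     ∧ ((Int.gcd ((W:ℤ)*(c % n : ℕ) + b) n = 1 ∧ Int.gcd ((W:ℤ)*(c % n : ℕ) + b - 1) (sFun n) = 1)))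
    := by
  have e1 : ∀ x : ℕ, (W:ℤ)*x + b - 1 = (W:ℤ)*x + (b-1) := fun x => by ring
  rw [gcd_split, sFun_mul hm hn h, gcd_split]
  rw [gcd_period W b dvd_rfl (Nat.mod_modEq c m), gcd_period W b dvd_rfl (Nat.mod_modEq c n),
    e1 c, e1 (c % m), e1 (c % n),
    gcd_period W (b-1) (sFun_dvd m) (Nat.mod_modEq c m),
    gcd_period W (b-1) (sFun_dvd n) (Nat.mod_modEq c n)]
  tauto

lemma eq_of_modEq_lt {a b n : ℕ} (h : a ≡ b [MOD n]) (ha : a < n) (hb : b < n) : a = b := by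
  rwa [Nat.ModEq, Nat.mod_eq_of_lt ha, Nat.mod_eq_of_lt hb] at h

lemma NN_one (W : ℕ) (b : ℤ) : NN W b 1 = 1 := by
  unfold NN sFun
  simp

lemma NN_mul (W : ℕ) (b : ℤ) {m n : ℕ} (hm : m ≠ 0) (hn : n ≠ 0) (h : Nat.Coprime m n) :
    NN W b (m * n) = NN W b m * NN W b n := by
  unfold NN
  rw [← Finset.card_product]
  apply Finset.card_bij' (fun c _ => (c % m, c % n))
      (fun p _ => (Nat.chineseRemainder h p.1 p.2 : ℕ) % (m*n))
  · intro c hc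
    simp only [mem_filter, mem_range] at hc
    simp only [mem_product, mem_filter, mem_range]
    obtain ⟨hlt, hcond⟩ := hc
    have := (cond_iff W b hm hn h c).mp hcond
    exact ⟨⟨Nat.mod_lt _ (Nat.pos_of_ne_zero hm), this.1⟩,
           ⟨Nat.mod_lt _ (Nat.pos_of_ne_zero hn), this.2⟩⟩
  · intro p hp
    simp only [mem_product, mem_filter, mem_range] at hp
    set k := (Nat.chineseRemainder h p.1 p.2 : ℕ) with hk
    have hmn : 0 < m * n := Nat.mul_pos (Nat.pos_of_ne_zero hm) (Nat.pos_of_ne_zero hn)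
    have hkm : k % (m*n) % m = p.1 := by
      have h1 : k % (m*n) ≡ p.1 [MOD m] :=
        ((Nat.mod_modEq k (m*n)).of_dvd ⟨n, rfl⟩).trans (Nat.chineseRemainder h p.1 p.2).2.1
      rw [Nat.ModEq, Nat.mod_eq_of_lt hp.1.1] at h1
      exact h1
    have hkn : k % (m*n) % n = p.2 := by
      have h1 : k % (m*n) ≡ p.2 [MOD n] :=
        ((Nat.mod_modEq k (m*n)).of_dvd ⟨m, mul_comm m n⟩).trans (Nat.chineseRemainder h p.1 p.2).2.2
      rw [Nat.ModEq, Nat.mod_eq_of_lt hp.2.1] at h1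
      exact h1
    simp only [mem_filter, mem_range]
    refine ⟨Nat.mod_lt _ hmn, ?_⟩
    rw [cond_iff W b hm hn h, hkm, hkn]
    exact ⟨hp.1.2, hp.2.2⟩
  · intro c hc
    simp only [mem_filter, mem_range] at hc
    set k := (Nat.chineseRemainder h (c % m) (c % n) : ℕ)
    have h1 : k % (m*n) ≡ c [MOD m*n] := by
      rw [← Nat.modEq_and_modEq_iff_modEq_mul h]
      constructor
      · exact ((Nat.mod_modEq k (m*n)).of_dvd ⟨n, rfl⟩).trans
          ((Nat.chineseRemainder h (c % m) (c % n)).2.1.trans (Nat.mod_modEq c m))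
      · exact ((Nat.mod_modEq k (m*n)).of_dvd ⟨m, mul_comm m n⟩).trans
          ((Nat.chineseRemainder h (c % m) (c % n)).2.2.trans (Nat.mod_modEq c n))
    exact eq_of_modEq_lt h1 (Nat.mod_lt _ (Nat.pos_of_ne_zero (by positivity))) hc.1
  · intro p hp
    simp only [mem_product, mem_filter, mem_range] at hp
    set k := (Nat.chineseRemainder h p.1 p.2 : ℕ) with hk
    have hkm : k % (m*n) % m = p.1 := by
      have h1 : k % (m*n) ≡ p.1 [MOD m] :=
        ((Nat.mod_modEq k (m*n)).of_dvd ⟨n, rfl⟩).trans (Nat.chineseRemainder h p.1 p.2).2.1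
      rw [Nat.ModEq, Nat.mod_eq_of_lt hp.1.1] at h1
      exact h1
    have hkn : k % (m*n) % n = p.2 := by
      have h1 : k % (m*n) ≡ p.2 [MOD n] :=
        ((Nat.mod_modEq k (m*n)).of_dvd ⟨m, mul_comm m n⟩).trans (Nat.chineseRemainder h p.1 p.2).2.2
      rw [Nat.ModEq, Nat.mod_eq_of_lt hp.2.1] at h1
      exact h1
    exact Prod.ext hkm hkn

lemma sFun_pp {p : ℕ} (hp : p.Prime) {e : ℕ} (he : e ≠ 0) :
    sFun (p^e) = if (p % 4 = 3 ∧ p ≠ 3) then p else 1 := by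
  unfold sFun
  rw [Nat.primeFactors_pow p he, hp.primeFactors, Finset.filter_singleton]
  split <;> simp

lemma gcd_pp_iff {p : ℕ} (hp : p.Prime) {e : ℕ} (he : e ≠ 0) (x : ℤ) :
    Int.gcd x (↑(p^e)) = 1 ↔ ¬ (p:ℤ) ∣ x := by
  rw [← Int.isCoprime_iff_gcd_eq_one]
  push_cast
  rw [IsCoprime.pow_right_iff (Nat.pos_of_ne_zero he), isCoprime_comm,
    (Nat.prime_iff_prime_int.mp hp).coprime_iff_not_dvd]

lemma count_res (p k u : ℕ) (hp : 0 < p) (hu : u < p) :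
    ((range (p*k)).filter (fun c => c % p = u)).card = k := by
  conv_rhs => rw [← Finset.card_range k]
  apply Finset.card_bij' (fun c _ => c / p) (fun d _ => p * d + u)
  · intro c hc
    simp only [mem_filter, mem_range] at hc ⊢
    exact Nat.div_lt_of_lt_mul hc.1
  · intro d hd
    simp only [mem_filter, mem_range] at hd ⊢
    constructor
    · calc p * d + u < p * d + p := by omega
        _ = p * (d+1) := by ring
        _ ≤ p * k := Nat.mul_le_mul_left p hd
    · rw [Nat.mul_add_mod, Nat.mod_eq_of_lt hu]
  · intro c hc
    simp only [mem_filter, mem_range] at hc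
    rw [← hc.2, Nat.div_add_mod]
  · intro d hd
    rw [Nat.mul_add_div hp, Nat.div_eq_of_lt hu]
    omega

lemma count_dvd {p : ℕ} (hp : p.Prime) {e : ℕ} (he : e ≠ 0) {W : ℕ} (hpW : ¬ p ∣ W) (a : ℤ) :
    ((range (p^e)).filter (fun c : ℕ => (p:ℤ) ∣ (W:ℤ)*c + a)).card = p^(e-1) := by
  haveI : Fact p.Prime := ⟨hp⟩
  have hWne : (W : ZMod p) ≠ 0 := fun hc => hpW ((ZMod.natCast_eq_zero_iff W p).mp hc)
  set u : ZMod p := (W : ZMod p)⁻¹ * (-a : ZMod p) with hu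
  have key : ∀ c : ℕ, ((p:ℤ) ∣ (W:ℤ)*c + a) ↔ c % p = u.val := by
    intro c
    rw [← ZMod.intCast_zmod_eq_zero_iff_dvd]
    push_cast
    constructor
    · intro hc
      have : (W : ZMod p) * (c : ZMod p) = -a := by linear_combination hc
      rw [hu, ← this, ← ZMod.val_natCast, inv_mul_cancel_left₀ hWne]
    · intro hc
      have h2 : (c : ZMod p) = u := by
        have h3 := congrArg (Nat.cast : ℕ → ZMod p) hc
        rwa [ZMod.natCast_val, ZMod.cast_id, ZMod.natCast_mod] at h3
      rw [h2, hu, mul_inv_cancel_left₀ hWne]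
      ring
  have hpe : p^e = p * p^(e-1) := by
    conv_lhs => rw [show e = 1 + (e-1) by omega]
    rw [pow_add, pow_one]
  rw [hpe]
  calc ((range (p * p^(e-1))).filter (fun c : ℕ => (p:ℤ) ∣ (W:ℤ)*c + a)).card
      = ((range (p * p^(e-1))).filter (fun c : ℕ => c % p = u.val)).card := by
        congr 1
        apply Finset.filter_congr
        intro c _
        simp only [key c]
    _ = p^(e-1) := count_res p _ u.val hp.pos (ZMod.val_lt u)

lemma gcd_p_iff {p : ℕ} (hp : p.Prime) (x : ℤ) : Int.gcd x (p:ℤ) = 1 ↔ ¬ (p:ℤ) ∣ x := by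
  have := gcd_pp_iff hp (e := 1) one_ne_zero x
  rwa [pow_one] at this

lemma NN_pp_of_dvd {p e W : ℕ} (b : ℤ) (hp : p.Prime) (he : e ≠ 0) (hpW : p ∣ W)
    (hbp : ¬ (p:ℤ) ∣ b) (hb1p : (p % 4 = 3 ∧ p ≠ 3) → ¬ (p:ℤ) ∣ (b-1)) :
    NN W b (p^e) = p^e := by
  unfold NN
  rw [Finset.filter_true_of_mem, Finset.card_range]
  intro c _
  have hpWc : (p:ℤ) ∣ (W:ℤ) * c := Dvd.dvd.mul_right (Int.natCast_dvd_natCast.mpr hpW) _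
  constructor
  · rw [gcd_pp_iff hp he]
    intro hcon
    exact hbp (by simpa using dvd_sub hcon hpWc)
  · rw [sFun_pp hp he]
    split
    next h4 =>
      rw [gcd_p_iff hp]
      intro hcon
      refine hb1p h4 ?_
      have : (W:ℤ)*c + b - 1 - (W:ℤ)*c = b - 1 := by ring
      rw [← this]
      exact dvd_sub hcon hpWc
    next => simp

lemma NN_pp_of_good {p e W : ℕ} (b : ℤ) (hp : p.Prime) (he : e ≠ 0) (hpW : ¬ p ∣ W)
    (h4 : ¬ (p % 4 = 3 ∧ p ≠ 3)) :
    NN W b (p^e) = p^e - p^(e-1) := by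
  unfold NN
  have h1 : ((range (p^e)).filter
      (fun c : ℕ => Int.gcd ((W : ℤ) * (c:ℤ) + b) (↑(p^e)) = 1 ∧
        Int.gcd ((W : ℤ) * (c:ℤ) + b - 1) (sFun (p^e)) = 1))
      = (range (p^e)).filter (fun c : ℕ => ¬ ((p:ℤ) ∣ (W:ℤ)*c + b)) := by
    apply Finset.filter_congr
    intro c _
    rw [sFun_pp hp he, if_neg h4, gcd_pp_iff hp he]
    simp
  rw [h1, Finset.filter_not, Finset.card_sdiff_of_subset (Finset.filter_subset _ _), Finset.card_range,
    count_dvd hp he hpW b]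

lemma NN_pp_of_bad {p e W : ℕ} (b : ℤ) (hp : p.Prime) (he : e ≠ 0) (hpW : ¬ p ∣ W)
    (h4 : p % 4 = 3 ∧ p ≠ 3) :
    NN W b (p^e) = p^e - 2 * p^(e-1) := by
  unfold NN
  have h1 : ((range (p^e)).filter
      (fun c : ℕ => Int.gcd ((W : ℤ) * (c:ℤ) + b) (↑(p^e)) = 1 ∧
        Int.gcd ((W : ℤ) * (c:ℤ) + b - 1) (sFun (p^e)) = 1))
      = (range (p^e)).filter
          (fun c : ℕ => ¬ (((p:ℤ) ∣ (W:ℤ)*c + b) ∨ ((p:ℤ) ∣ (W:ℤ)*c + (b-1)))) := by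
    apply Finset.filter_congr
    intro c _
    rw [sFun_pp hp he, if_pos h4, gcd_pp_iff hp he, gcd_p_iff hp,
      show (W:ℤ)*c + b - 1 = (W:ℤ)*c + (b-1) by ring]
    simp only [not_or]
  rw [h1, Finset.filter_not, Finset.card_sdiff_of_subset (Finset.filter_subset _ _), Finset.card_range,
    Finset.filter_or, Finset.card_union_of_disjoint, count_dvd hp he hpW b,
    count_dvd hp he hpW (b-1)]
  · ring_nf
  · rw [Finset.disjoint_left]
    intro c hc1 hc2
    simp only [mem_filter] at hc1 hc2
    have : (p:ℤ) ∣ 1 := by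
      have : ((W:ℤ)*c + b) - ((W:ℤ)*c + (b-1)) = 1 := by ring
      rw [← this]
      exact dvd_sub hc1.2 hc2.2
    have := Int.le_of_dvd one_pos this
    have := hp.two_le
    omega

lemma NN_factor {W : ℕ} (b : ℤ) {Q : ℕ} (hQ : Q ≠ 0) :
    NN W b Q = ∏ p ∈ Q.primeFactors, NN W b (p ^ Q.factorization p) := by
  have hmult : ∀ x y : ℕ, Nat.Coprime x y → NN W b (x*y) = NN W b x * NN W b y := by
    intro x y hxy
    rcases eq_or_ne x 0 with rfl | hx
    · have : y = 1 := by simpa using hxy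
      subst this
      simp [NN]
    rcases eq_or_ne y 0 with rfl | hy
    · simp [NN]
    exact NN_mul W b hx hy hxy
  rw [Nat.multiplicative_factorization _ hmult (NN_one W b) hQ]
  rfl

theorem stmt_12 (J w Q W : ℕ) (hJ : 5 ≤ J) (hw : 10^(10^10) ≤ w) (hQ : 1 ≤ Q)
    (hW : W = 2^J * 27 * ∏ p ∈ (Finset.Icc 5 w).filter Nat.Prime, p)
    (b : ℤ) (hb : Int.gcd b W = 1) (hb1 : Int.gcd (b - 1) (sFun W) = 1) :
    ((((Finset.range Q).filter
        (fun c : ℕ => Int.gcd ((W : ℤ) * (c:ℤ) + b) Q = 1 ∧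
          Int.gcd ((W : ℤ) * (c:ℤ) + b - 1) (sFun Q) = 1)).card : ℝ))
      = (Q : ℝ) *
        (∏ p ∈ Q.primeFactors.filter
            (fun p => ¬ p ∣ W ∧ (p % 4 = 1 ∨ p = 2 ∨ p = 3)), (1 - 1/(p:ℝ))) *
        (∏ p ∈ Q.primeFactors.filter
            (fun p => ¬ p ∣ W ∧ p % 4 = 3 ∧ p ≠ 3), (1 - 2/(p:ℝ))) := by
  clear hw
  have hQ0 : Q ≠ 0 := by omega
  have hLHS : ((Finset.range Q).filter
      (fun c : ℕ => Int.gcd ((W : ℤ) * (c:ℤ) + b) Q = 1 ∧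
        Int.gcd ((W : ℤ) * (c:ℤ) + b - 1) (sFun Q) = 1)).card = NN W b Q := rfl
  rw [hLHS, NN_factor b hQ0, Nat.cast_prod]
  have hQprod : (Q:ℝ) = ∏ p ∈ Q.primeFactors, ((p:ℝ))^(Q.factorization p) := by
    have h0 : Q = ∏ p ∈ Q.primeFactors, p ^ Q.factorization p := by
      conv_lhs => rw [← Nat.factorization_prod_pow_eq_self hQ0]
      rfl
    conv_lhs => rw [h0]
    push_cast
    rfl
  rw [hQprod, Finset.prod_filter, Finset.prod_filter, ← Finset.prod_mul_distrib,
    ← Finset.prod_mul_distrib]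
  apply Finset.prod_congr rfl
  intro p hp
  have hpp : p.Prime := Nat.prime_of_mem_primeFactors hp
  have hpQ : p ∣ Q := Nat.dvd_of_mem_primeFactors hp
  have he : Q.factorization p ≠ 0 := (hpp.factorization_pos_of_dvd hQ0 hpQ).ne'
  have hp2le := hpp.two_le
  by_cases hpW : p ∣ W
  · rw [if_neg (by tauto), if_neg (by tauto)]
    have hbp : ¬ (p:ℤ) ∣ b := by
      intro hcon
      have hcop : IsCoprime b ((W:ℕ):ℤ) := Int.isCoprime_iff_gcd_eq_one.mpr hb
      have hu := hcop.isUnit_of_dvd' hcon (Int.natCast_dvd_natCast.mpr hpW)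
      rw [Int.isUnit_iff] at hu
      omega
    have hWpos : 0 < W := by
      rw [hW]
      exact Nat.mul_pos (Nat.mul_pos (pow_pos (by norm_num : (0:ℕ) < 2) J) (by norm_num))
        (Finset.prod_pos fun q hq => (Finset.mem_filter.mp hq).2.pos)
    have hb1p : (p % 4 = 3 ∧ p ≠ 3) → ¬ (p:ℤ) ∣ (b-1) := by
      intro h4 hcon
      have hps : p ∣ sFun W := by
        apply Finset.dvd_prod_of_mem
        rw [Finset.mem_filter, Nat.mem_primeFactors]
        exact ⟨⟨hpp, hpW, hWpos.ne'⟩, h4⟩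
      have hcop : IsCoprime (b-1) ((sFun W : ℕ):ℤ) := Int.isCoprime_iff_gcd_eq_one.mpr hb1
      have hu := hcop.isUnit_of_dvd' hcon (Int.natCast_dvd_natCast.mpr hps)
      rw [Int.isUnit_iff] at hu
      have := hpp.two_le
      omega
    rw [NN_pp_of_dvd b hpp he hpW hbp hb1p]
    push_cast
    ring
  · have h2W : 2 ∣ W := by
      rw [hW]
      exact Dvd.dvd.mul_right (dvd_mul_of_dvd_left (dvd_pow_self 2 (by omega)) 27) _
    have h3W : 3 ∣ W := by
      rw [hW]
      exact Dvd.dvd.mul_right (dvd_mul_of_dvd_right (by norm_num) _) _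
    have hp2 : p ≠ 2 := fun h => hpW (h ▸ h2W)
    have hp3 : p ≠ 3 := fun h => hpW (h ▸ h3W)
    have hodd : p % 2 = 1 := hpp.eq_two_or_odd.resolve_left hp2
    have hpne : (p:ℝ) ≠ 0 := Nat.cast_ne_zero.mpr (by omega)
    obtain ⟨e', he'⟩ : ∃ e', Q.factorization p = e' + 1 := ⟨Q.factorization p - 1, by omega⟩
    have hmod : p % 4 = 1 ∨ p % 4 = 3 := by omega
    rcases hmod with hmod | hmod
    · rw [if_pos ⟨hpW, Or.inl hmod⟩, if_neg (by rintro ⟨-, h43, -⟩; omega)]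
      rw [NN_pp_of_good b hpp he hpW (by rintro ⟨h43, -⟩; omega), he', Nat.add_sub_cancel,
        Nat.cast_sub (Nat.pow_le_pow_right hpp.pos (by omega))]
      push_cast
      field_simp
      ring
    · rw [if_neg (by rintro ⟨-, (h1 | h1 | h1)⟩ <;> omega), if_pos ⟨hpW, hmod, hp3⟩]
      rw [NN_pp_of_bad b hpp he hpW ⟨hmod, hp3⟩, he', Nat.add_sub_cancel]
      have hle : 2 * p^e' ≤ p^(e'+1) := by
        calc 2 * p^e' ≤ p * p^e' := Nat.mul_le_mul_right _ (by omega)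
          _ = p^(e'+1) := by ring
      rw [Nat.cast_sub hle]
      push_cast
      field_simp
      ring
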